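/- Fix integers N ≥ 1 and B ≥ 1, and represent an ensemble of N stacks (each holding at most B items) together with a count of discarded items by a pair (Q, L), where Q : {1,…,B} → {0,…,N} is nonincreasing (Q_i = number of stacks with at least i items) and L ∈ ℕ. Suppose two ensembles (Q^A, L^A) and (Q^B, L^B) satisfy ∑_{i=m}^{B} Q^A_i + L^A ≤ ∑_{i=m}^{B} Q^B_i + L^B for every m ∈ {1,…,B}, and also L^A ≤ L^B. Then: (a) for any 1 ≤ n_A ≤ n_B ≤ N, after adding one item to the n_A-th ordered stack of ensemble A and one item to the n_B-th ordered stack of ensemble B, all of these inequalities (including L^A ≤ L^B) still hold; and (b) for any 1 ≤ k ≤ N, after removing one item from the k-th ordered stack in both ensembles, all of these inequalities (including L^A ≤ L^B) still hold. Consequently, if two ensembles follow Rule(n_A, n_B, k) with n_A ≤ n_B at every step starting from a common initial state, then ∑_{i=m}^{B} Q^A_i + L^A ≤ ∑_{i=m}^{B} Q^B_i + L^B is preserved for all m ≤ B throughout. -/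

import Mathlib

/-- The height of the `n`-th ordered stack (stacks arranged in nondecreasing
order of height): `h_n(Q) = #{i ∈ {1,…,B} : Q_i ≥ N − n + 1}`. -/
def stackHeight (N B : ℕ) (Q : ℕ → ℕ) (n : ℕ) : ℕ :=
  ((Finset.Icc 1 B).filter (fun i => N - n + 1 ≤ Q i)).card

/-- Adding an item to the `n`-th ordered stack of the ensemble `(Q, L)`:
increment row `h_n(Q)+1` if `h_n(Q) < B`, otherwise discard the item. -/
def addItem (N B : ℕ) (Q : ℕ → ℕ) (L : ℕ) (n : ℕ) : (ℕ → ℕ) × ℕ :=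
  if stackHeight N B Q n < B then
    (fun i => if i = stackHeight N B Q n + 1 then Q i + 1 else Q i, L)
  else (Q, L + 1)

/-- Removing an item from the `k`-th ordered stack of the ensemble `(Q, L)`:
decrement row `h_k(Q)` if the stack is nonempty, otherwise do nothing. -/
def removeItem (N B : ℕ) (Q : ℕ → ℕ) (L : ℕ) (k : ℕ) : (ℕ → ℕ) × ℕ :=
  if 1 ≤ stackHeight N B Q k then
    (fun i => if i = stackHeight N B Q k then Q i - 1 else Q i, L)
  else (Q, L)

/-- A valid ensemble of `N` stacks of maximum height `B`: the row counts
`Q_1 ≥ Q_2 ≥ ⋯ ≥ Q_B` are nonincreasing and bounded by `N`. -/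
def ValidEnsemble (N B : ℕ) (Q : ℕ → ℕ) : Prop :=
  (∀ i, 1 ≤ i → i ≤ B → Q i ≤ N) ∧ (∀ i, 1 ≤ i → i < B → Q (i + 1) ≤ Q i)

/-- The ordering between two ensembles: all tail sums (plus discarded items)
are ordered, and the numbers of discarded items are ordered. -/
def EnsembleLE (B : ℕ) (pA pB : (ℕ → ℕ) × ℕ) : Prop :=
  (∀ m, 1 ≤ m → m ≤ B →
    (∑ i ∈ Finset.Icc m B, pA.1 i) + pA.2 ≤ (∑ i ∈ Finset.Icc m B, pB.1 i) + pB.2) ∧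
  pA.2 ≤ pB.2

/-- A single step in `Rule(n_A, n_B, k)`: either an item is added
(to the `n_A`-th stack of ensemble A and the `n_B`-th stack of ensemble B),
or an item is removed from the `k`-th stack of both ensembles. -/
inductive StackStep where
  | add (nA nB : ℕ) : StackStep
  | remove (k : ℕ) : StackStep

/-- Applying a step to ensemble A. -/
def applyA (N B : ℕ) (st : StackStep) (p : (ℕ → ℕ) × ℕ) : (ℕ → ℕ) × ℕ :=
  match st with
  | .add nA _ => addItem N B p.1 p.2 nA
  | .remove k => removeItem N B p.1 p.2 k

/-- Applying a step to ensemble B. -/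
def applyB (N B : ℕ) (st : StackStep) (p : (ℕ → ℕ) × ℕ) : (ℕ → ℕ) × ℕ :=
  match st with
  | .add _ nB => addItem N B p.1 p.2 nB
  | .remove k => removeItem N B p.1 p.2 k

/-- A step following `Rule(n_A, n_B, k)` with `n_A ≤ n_B`. -/
def ValidStep (N : ℕ) (st : StackStep) : Prop :=
  match st with
  | .add nA nB => 1 ≤ nA ∧ nA ≤ nB ∧ nB ≤ N
  | .remove k => 1 ≤ k ∧ k ≤ N

lemma valid_anti {N B : ℕ} {Q : ℕ → ℕ} (hQ : ValidEnsemble N B Q) :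
    ∀ j i, 1 ≤ j → j ≤ i → i ≤ B → Q i ≤ Q j := by
  intro j i h1 hji
  induction i, hji using Nat.le_induction with
  | base => exact fun _ => le_refl _
  | succ i hi ih =>
    intro hiB
    exact le_trans (hQ.2 i (h1.trans hi) (by omega)) (ih (by omega))

lemma stackHeight_le (N B : ℕ) (Q : ℕ → ℕ) (n : ℕ) : stackHeight N B Q n ≤ B := by
  have := Finset.card_filter_le (Finset.Icc 1 B) (fun i => N - n + 1 ≤ Q i)
  simpa [stackHeight, Nat.card_Icc] using this

lemma le_stackHeight_iff {N B : ℕ} {Q : ℕ → ℕ} (hQ : ValidEnsemble N B Q) {n i : ℕ}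
    (h1 : 1 ≤ i) (hiB : i ≤ B) :
    i ≤ stackHeight N B Q n ↔ N - n + 1 ≤ Q i := by
  constructor
  · intro hh
    by_contra hc
    push_neg at hc
    have hsub : (Finset.Icc 1 B).filter (fun j => N - n + 1 ≤ Q j) ⊆ Finset.Ico 1 i := by
      intro j hj
      simp only [Finset.mem_filter, Finset.mem_Icc] at hj
      refine Finset.mem_Ico.mpr ⟨hj.1.1, ?_⟩
      by_contra h'
      push_neg at h'
      have := hj.2.trans (valid_anti hQ i j h1 h' hj.1.2)
      omega
    have hcard := Finset.card_le_card hsub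
    simp only [stackHeight] at hh
    rw [Nat.card_Ico] at hcard
    omega
  · intro hQi
    have hsub : Finset.Icc 1 i ⊆ (Finset.Icc 1 B).filter (fun j => N - n + 1 ≤ Q j) := by
      intro j hj
      simp only [Finset.mem_Icc] at hj
      exact Finset.mem_filter.mpr ⟨Finset.mem_Icc.mpr ⟨hj.1, hj.2.trans hiB⟩,
        hQi.trans (valid_anti hQ j i hj.1 hj.2 hiB)⟩
    have := Finset.card_le_card hsub
    simpa [stackHeight, Nat.card_Icc] using this

lemma addItem_fst_pos {N B : ℕ} {Q : ℕ → ℕ} {L n : ℕ} (h : stackHeight N B Q n < B) :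
    (addItem N B Q L n).1 = fun i => if i = stackHeight N B Q n + 1 then Q i + 1 else Q i := by
  unfold addItem; rw [if_pos h]

lemma addItem_snd_pos {N B : ℕ} {Q : ℕ → ℕ} {L n : ℕ} (h : stackHeight N B Q n < B) :
    (addItem N B Q L n).2 = L := by
  unfold addItem; rw [if_pos h]

lemma addItem_fst_neg {N B : ℕ} {Q : ℕ → ℕ} {L n : ℕ} (h : ¬ stackHeight N B Q n < B) :
    (addItem N B Q L n).1 = Q := by
  unfold addItem; rw [if_neg h]

lemma addItem_snd_neg {N B : ℕ} {Q : ℕ → ℕ} {L n : ℕ} (h : ¬ stackHeight N B Q n < B) :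
    (addItem N B Q L n).2 = L + 1 := by
  unfold addItem; rw [if_neg h]

lemma removeItem_fst_pos {N B : ℕ} {Q : ℕ → ℕ} {L k : ℕ} (h : 1 ≤ stackHeight N B Q k) :
    (removeItem N B Q L k).1 = fun i => if i = stackHeight N B Q k then Q i - 1 else Q i := by
  unfold removeItem; rw [if_pos h]

lemma removeItem_fst_neg {N B : ℕ} {Q : ℕ → ℕ} {L k : ℕ} (h : ¬ 1 ≤ stackHeight N B Q k) :
    (removeItem N B Q L k).1 = Q := by
  unfold removeItem; rw [if_neg h]

lemma removeItem_snd {N B : ℕ} {Q : ℕ → ℕ} {L k : ℕ} :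
    (removeItem N B Q L k).2 = L := by
  unfold removeItem; split <;> rfl

lemma sum_split {m B : ℕ} (hm : m ≤ B) (Q : ℕ → ℕ) :
    ∑ i ∈ Finset.Icc m B, Q i = Q m + ∑ i ∈ Finset.Icc (m+1) B, Q i := by
  rw [← Finset.Ioc_insert_left hm, Finset.sum_insert (by simp), ← Finset.Icc_add_one_left_eq_Ioc]

lemma sum_ite_add (s : Finset ℕ) (j : ℕ) (Q : ℕ → ℕ) :
    (∑ i ∈ s, (if i = j then Q i + 1 else Q i))
      = (∑ i ∈ s, Q i) + (if j ∈ s then 1 else 0) := by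
  have h : ∀ i ∈ s, (if i = j then Q i + 1 else Q i) = Q i + (if i = j then 1 else 0) := by
    intro i _; split <;> simp
  rw [Finset.sum_congr rfl h, Finset.sum_add_distrib, Finset.sum_ite_eq' s j (fun _ => 1)]

lemma sum_ite_sub (s : Finset ℕ) (j : ℕ) (Q : ℕ → ℕ) (hj : 1 ≤ Q j) :
    (∑ i ∈ s, (if i = j then Q i - 1 else Q i)) + (if j ∈ s then 1 else 0)
      = ∑ i ∈ s, Q i := by
  have h : ∀ i ∈ s, Q i = (if i = j then Q i - 1 else Q i) + (if i = j then 1 else 0) := by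
    intro i _
    by_cases h : i = j
    · subst h; simp; omega
    · simp [h]
  have h2 := Finset.sum_congr rfl h
  rw [Finset.sum_add_distrib, Finset.sum_ite_eq' s j (fun _ => 1)] at h2
  exact h2.symm

lemma addItem_total {N B : ℕ} {Q : ℕ → ℕ} {L n m : ℕ} (h1 : 1 ≤ m) (hmB : m ≤ B) :
    (∑ i ∈ Finset.Icc m B, (addItem N B Q L n).1 i) + (addItem N B Q L n).2
      = ((∑ i ∈ Finset.Icc m B, Q i) + L)
        + (if m ≤ stackHeight N B Q n + 1 then 1 else 0) := by
  by_cases hlt : stackHeight N B Q n < B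
  · rw [addItem_fst_pos hlt, addItem_snd_pos hlt]
    simp only
    rw [sum_ite_add]
    by_cases hm : m ≤ stackHeight N B Q n + 1
    · rw [if_pos (Finset.mem_Icc.mpr ⟨hm, hlt⟩), if_pos hm]
      omega
    · rw [if_neg (fun hc => hm (Finset.mem_Icc.mp hc).1), if_neg hm]
      omega
  · rw [addItem_fst_neg hlt, addItem_snd_neg hlt, if_pos (by omega)]
    omega

lemma removeItem_total {N B : ℕ} {Q : ℕ → ℕ} {L k m : ℕ} (hQ : ValidEnsemble N B Q)
    (h1 : 1 ≤ m) (hmB : m ≤ B) :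
    (∑ i ∈ Finset.Icc m B, (removeItem N B Q L k).1 i) + (removeItem N B Q L k).2
      + (if m ≤ stackHeight N B Q k then 1 else 0)
      = (∑ i ∈ Finset.Icc m B, Q i) + L := by
  rw [removeItem_snd]
  by_cases hpos : 1 ≤ stackHeight N B Q k
  · rw [removeItem_fst_pos hpos]
    simp only
    have hhB : stackHeight N B Q k ≤ B := stackHeight_le N B Q k
    have hQh : 1 ≤ Q (stackHeight N B Q k) := by
      have := (le_stackHeight_iff hQ hpos hhB).mp le_rfl
      omega
    have hs := sum_ite_sub (Finset.Icc m B) (stackHeight N B Q k) Q hQh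
    by_cases hm : m ≤ stackHeight N B Q k
    · rw [if_pos (Finset.mem_Icc.mpr ⟨hm, hhB⟩)] at hs
      rw [if_pos hm]
      omega
    · rw [if_neg (fun hc => hm (Finset.mem_Icc.mp hc).1)] at hs
      rw [if_neg hm]
      omega
  · rw [removeItem_fst_neg hpos, if_neg (by omega)]
    omega

lemma add_pres {N B : ℕ} (hBp : 1 ≤ B) {QA QB : ℕ → ℕ} {LA LB : ℕ}
    (hA : ValidEnsemble N B QA) (hBv : ValidEnsemble N B QB)
    (hsum : ∀ m, 1 ≤ m → m ≤ B →
      (∑ i ∈ Finset.Icc m B, QA i) + LA ≤ (∑ i ∈ Finset.Icc m B, QB i) + LB)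
    (hL : LA ≤ LB)
    {nA nB : ℕ} (h1 : 1 ≤ nA) (hab : nA ≤ nB) (hbN : nB ≤ N) :
    EnsembleLE B (addItem N B QA LA nA) (addItem N B QB LB nB) := by
  have hAle := stackHeight_le N B QA nA
  have hBle := stackHeight_le N B QB nB
  have crucial : ∀ j, 1 ≤ j → j ≤ stackHeight N B QA nA → stackHeight N B QB nB < j →
      QB j + 1 ≤ QA j := by
    intro j hj1 hjA hjB
    have hjB' : j ≤ B := le_trans hjA hAle
    have hq1 : N - nA + 1 ≤ QA j := (le_stackHeight_iff hA hj1 hjB').mp hjA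
    have hq2 : ¬ (N - nB + 1 ≤ QB j) := fun hc => by
      have := (le_stackHeight_iff hBv hj1 hjB').mpr hc
      omega
    omega
  constructor
  · intro m hm1 hmB
    rw [addItem_total hm1 hmB, addItem_total hm1 hmB]
    by_cases hb : m ≤ stackHeight N B QB nB + 1
    · have := hsum m hm1 hmB
      by_cases ha : m ≤ stackHeight N B QA nA + 1 <;> simp only [ha, hb, if_true, if_false] <;> omega
    · by_cases ha : m ≤ stackHeight N B QA nA + 1
      · have hm2 : 2 ≤ m := by omega
        have hcu := crucial (m-1) (by omega) (by omega) (by omega)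
        have hs := hsum (m-1) (by omega) (by omega)
        have hm' : m - 1 + 1 = m := by omega
        rw [sum_split (by omega : m - 1 ≤ B) QA, sum_split (by omega : m - 1 ≤ B) QB, hm'] at hs
        simp only [ha, hb, if_true, if_false]
        omega
      · have := hsum m hm1 hmB
        simp only [ha, hb, if_false]
        omega
  · by_cases ha : stackHeight N B QA nA < B <;> by_cases hb : stackHeight N B QB nB < B
    · rw [addItem_snd_pos ha, addItem_snd_pos hb]; exact hL
    · rw [addItem_snd_pos ha, addItem_snd_neg hb]; omega
    · rw [addItem_snd_neg ha, addItem_snd_pos hb]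
      have hs := hsum B hBp le_rfl
      rw [Finset.Icc_self, Finset.sum_singleton, Finset.sum_singleton] at hs
      have hcu := crucial B hBp (by omega) (by omega)
      omega
    · rw [addItem_snd_neg ha, addItem_snd_neg hb]; omega

lemma remove_pres {N B : ℕ} {QA QB : ℕ → ℕ} {LA LB : ℕ}
    (hA : ValidEnsemble N B QA) (hBv : ValidEnsemble N B QB)
    (hsum : ∀ m, 1 ≤ m → m ≤ B →
      (∑ i ∈ Finset.Icc m B, QA i) + LA ≤ (∑ i ∈ Finset.Icc m B, QB i) + LB)
    (hL : LA ≤ LB) (k : ℕ) :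
    EnsembleLE B (removeItem N B QA LA k) (removeItem N B QB LB k) := by
  constructor
  · intro m hm1 hmB
    have tA := removeItem_total (L := LA) (k := k) hA hm1 hmB
    have tB := removeItem_total (L := LB) (k := k) hBv hm1 hmB
    by_cases hb : m ≤ stackHeight N B QB k
    · by_cases ha : m ≤ stackHeight N B QA k
      · rw [if_pos ha] at tA
        rw [if_pos hb] at tB
        have := hsum m hm1 hmB
        omega
      · rw [if_neg ha] at tA
        rw [if_pos hb] at tB
        have hQB : N - k + 1 ≤ QB m := (le_stackHeight_iff hBv hm1 hmB).mp hb
        have hQA : ¬ (N - k + 1 ≤ QA m) := fun hc =>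
          ha ((le_stackHeight_iff hA hm1 hmB).mpr hc)
        have hnext : (∑ i ∈ Finset.Icc (m+1) B, QA i) + LA
            ≤ (∑ i ∈ Finset.Icc (m+1) B, QB i) + LB := by
          rcases eq_or_lt_of_le hmB with h | h
          · rw [Finset.Icc_eq_empty (by omega), Finset.sum_empty, Finset.sum_empty]
            simpa using hL
          · exact hsum (m+1) (by omega) h
        have hsA := sum_split hmB QA
        have hsB := sum_split hmB QB
        omega
    · by_cases ha : m ≤ stackHeight N B QA k
      · rw [if_pos ha] at tA
        rw [if_neg hb] at tB
        have := hsum m hm1 hmB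
        omega
      · rw [if_neg ha] at tA
        rw [if_neg hb] at tB
        have := hsum m hm1 hmB
        omega
  · rw [removeItem_snd, removeItem_snd]; exact hL

lemma addItem_valid {N B : ℕ} {Q : ℕ → ℕ} (hQ : ValidEnsemble N B Q) {L n : ℕ}
    (h1 : 1 ≤ n) (hnN : n ≤ N) :
    ValidEnsemble N B (addItem N B Q L n).1 := by
  by_cases hlt : stackHeight N B Q n < B
  · rw [addItem_fst_pos hlt]
    have hQh1 : ¬ (N - n + 1 ≤ Q (stackHeight N B Q n + 1)) := fun hc => by
      have := (le_stackHeight_iff hQ (by omega) (by omega)).mpr hc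
      omega
    constructor
    · intro i hi1 hiB
      by_cases he : i = stackHeight N B Q n + 1
      · subst he
        simp only [if_pos rfl, ite_true, eq_self_iff_true, if_true]
        omega
      · simp only [if_neg he]
        exact hQ.1 i hi1 hiB
    · intro i hi1 hiB
      by_cases he1 : i + 1 = stackHeight N B Q n + 1 <;>
        by_cases he2 : i = stackHeight N B Q n + 1
      · omega
      · simp only [if_pos he1, if_neg he2]
        have hg : N - n + 1 ≤ Q i := (le_stackHeight_iff hQ hi1 (by omega)).mp (by omega)
        have hup : ¬ (N - n + 1 ≤ Q (i + 1)) := by rw [he1]; exact hQh1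
        omega
      · simp only [if_neg he1, if_pos he2]
        have := hQ.2 i hi1 hiB
        omega
      · simp only [if_neg he1, if_neg he2]
        exact hQ.2 i hi1 hiB
  · rw [addItem_fst_neg hlt]
    exact hQ

lemma removeItem_valid {N B : ℕ} {Q : ℕ → ℕ} (hQ : ValidEnsemble N B Q) {L k : ℕ} :
    ValidEnsemble N B (removeItem N B Q L k).1 := by
  by_cases hpos : 1 ≤ stackHeight N B Q k
  · rw [removeItem_fst_pos hpos]
    have hhB : stackHeight N B Q k ≤ B := stackHeight_le N B Q k
    have hQh : N - k + 1 ≤ Q (stackHeight N B Q k) :=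
      (le_stackHeight_iff hQ hpos hhB).mp le_rfl
    constructor
    · intro i hi1 hiB
      by_cases he : i = stackHeight N B Q k
      · simp only [if_pos he]
        have := hQ.1 i hi1 hiB
        omega
      · simp only [if_neg he]
        exact hQ.1 i hi1 hiB
    · intro i hi1 hiB
      have hmono := hQ.2 i hi1 hiB
      by_cases he1 : i + 1 = stackHeight N B Q k <;>
        by_cases he2 : i = stackHeight N B Q k
      · omega
      · simp only [if_pos he1, if_neg he2]
        omega
      · simp only [if_neg he1, if_pos he2]
        have hup : ¬ (N - k + 1 ≤ Q (i + 1)) := fun hc => by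
          have := (le_stackHeight_iff hQ (by omega) (by omega)).mpr hc
          omega
        have : N - k + 1 ≤ Q i := he2 ▸ hQh
        omega
      · simp only [if_neg he1, if_neg he2]
        exact hmono
  · rw [removeItem_fst_neg hpos]
    exact hQ

/-- **Deterministic ordering of ensembles of stacks (Proposition 1).**
(a) Adding an item to the `n_A`-th stack of A and the `n_B`-th stack of B with
`n_A ≤ n_B` preserves the tail-sum ordering (including `L^A ≤ L^B`);
(b) removing an item from the `k`-th stack of both ensembles preserves it;
consequently, two ensembles following `Rule(n_A, n_B, k)` with `n_A ≤ n_B` at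
every step, starting from a common state, remain ordered throughout. -/
theorem ensemble_ordering_preserved (N B : ℕ) (hN : 1 ≤ N) (hB : 1 ≤ B) :
    (∀ (QA QB : ℕ → ℕ) (LA LB : ℕ),
      ValidEnsemble N B QA → ValidEnsemble N B QB →
      EnsembleLE B (QA, LA) (QB, LB) →
      (∀ nA nB, 1 ≤ nA → nA ≤ nB → nB ≤ N →
        EnsembleLE B (addItem N B QA LA nA) (addItem N B QB LB nB)) ∧
      (∀ k, 1 ≤ k → k ≤ N →
        EnsembleLE B (removeItem N B QA LA k) (removeItem N B QB LB k))) ∧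
    (∀ (Q0 : ℕ → ℕ) (L0 : ℕ), ValidEnsemble N B Q0 →
      ∀ steps : List StackStep, (∀ st ∈ steps, ValidStep N st) →
        EnsembleLE B
          (steps.foldl (fun p st => applyA N B st p) (Q0, L0))
          (steps.foldl (fun p st => applyB N B st p) (Q0, L0))) := by
  constructor
  · intro QA QB LA LB hA hBv hLE
    exact ⟨fun nA nB h1 h2 h3 => add_pres hB hA hBv hLE.1 hLE.2 h1 h2 h3,
           fun k _ _ => remove_pres hA hBv hLE.1 hLE.2 k⟩
  · intro Q0 L0 hQ0 steps hsteps
    suffices H : ∀ steps : List StackStep, (∀ st ∈ steps, ValidStep N st) →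
        ∀ pA pB : (ℕ → ℕ) × ℕ, ValidEnsemble N B pA.1 → ValidEnsemble N B pB.1 →
        EnsembleLE B pA pB →
        EnsembleLE B (steps.foldl (fun p st => applyA N B st p) pA)
          (steps.foldl (fun p st => applyB N B st p) pB) by
      exact H steps hsteps (Q0, L0) (Q0, L0) hQ0 hQ0 ⟨fun m _ _ => le_rfl, le_rfl⟩
    intro steps
    induction steps with
    | nil => exact fun _ pA pB _ _ h => h
    | cons st rest ih =>
      intro hval pA pB hvA hvB hle
      simp only [List.foldl_cons]
      have hst := hval st List.mem_cons_self
      refine ih (fun s hs => hval s (List.mem_cons_of_mem _ hs)) _ _ ?_ ?_ ?_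
      · cases st with
        | add nA nB =>
          obtain ⟨g1, g2, g3⟩ := hst
          exact addItem_valid hvA g1 (g2.trans g3)
        | remove k =>
          exact removeItem_valid hvA
      · cases st with
        | add nA nB =>
          obtain ⟨g1, g2, g3⟩ := hst
          exact addItem_valid hvB (g1.trans g2) g3
        | remove k =>
          exact removeItem_valid hvB
      · cases st with
        | add nA nB =>
          obtain ⟨g1, g2, g3⟩ := hst
          exact add_pres hB hvA hvB hle.1 hle.2 g1 g2 g3
        | remove k =>
          exact remove_pres hvA hvB hle.1 hle.2 k
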